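/- Let G = (V, E) be a finite, undirected, connected simple graph with positive edge weights, let t ≥ 1, let ℓ = 2^m be a power of two, and let T_ℓ ⊆ … ⊆ T_1 ⊆ V be nested terminal sets. Take the linear level-cost function g(i) = i, the rounding set Q = {2^0, 2^1, …, 2^m}, and q(i) = 2^{⌈log₂ i⌉}. For each k ∈ {0, 1, …, m} let H_k ⊆ E be a minimum-weight subsetwise t-spanner of G over T_{min{ i : q(i) = 2^k }} (which equals T_1 for k = 0 and T_{2^{k−1}+1} for k ≥ 1). Define E_i := ⋃_{k : 2^k ≥ q(i)} H_k for i = 1,…,ℓ. Then E_ℓ ⊆ … ⊆ E_1, each E_i is a subsetwise t-spanner of G over T_i, and the cost Σ_{e ∈ E_1} y(e)·w(e), where y(e) = max{ i : e ∈ E_i }, is at most 4·OPT_ML. -/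

import Mathlib

open SimpleGraph Finset

variable {V : Type*}

/-- Total weight of a walk: sum of its edge weights. -/
def walkWeight (w : Sym2 V → ℝ) {G : SimpleGraph V} {u v : V} (p : G.Walk u v) : ℝ :=
  (p.edges.map w).sum

/-- Total weight of a finite edge set. -/
def setWeight (w : Sym2 V → ℝ) (E' : Finset (Sym2 V)) : ℝ :=
  ∑ e ∈ E', w e

/-- Shortest-walk distance in `G` between `u` and `v`. -/
noncomputable def graphDist (G : SimpleGraph V) (w : Sym2 V → ℝ) (u v : V) : ℝ :=
  sInf {c : ℝ | ∃ p : G.Walk u v, walkWeight w p = c}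

/-- `E'` is a subsetwise `f`-spanner of `G` over `T`:  `E' ⊆ E(G)` and for all terminals
`u, v ∈ T` there is a walk from `u` to `v` using only edges of `E'` of total weight at most
`f (d_G(u,v))` (equivalently, `d_{E'}(u,v) ≤ f (d_G(u,v))`). -/
def IsSpanner (G : SimpleGraph V) (w : Sym2 V → ℝ) (T : Set V) (f : ℝ → ℝ)
    (E' : Finset (Sym2 V)) : Prop :=
  ↑E' ⊆ G.edgeSet ∧
    ∀ u ∈ T, ∀ v ∈ T, ∃ p : G.Walk u v,
      (∀ e ∈ p.edges, e ∈ E') ∧ walkWeight w p ≤ f (graphDist G w u v)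

/-- A distortion function: `f(x) ≥ x` for all `x ≥ 0`. -/
def IsDistortion (f : ℝ → ℝ) : Prop := ∀ x : ℝ, 0 ≤ x → x ≤ f x

/-- Steiner tree weight: minimum weight of an edge set `E' ⊆ E(G)` connecting all of `T`. -/
noncomputable def steinerWeight (G : SimpleGraph V) (w : Sym2 V → ℝ) (T : Set V) : ℝ :=
  sInf {c : ℝ | ∃ E' : Finset (Sym2 V), ↑E' ⊆ G.edgeSet ∧
    (∀ u ∈ T, ∀ v ∈ T, ∃ p : G.Walk u v, ∀ e ∈ p.edges, e ∈ E') ∧ setWeight w E' = c}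

/-- Minimum weight of a subsetwise `f`-spanner of `G` over `T`. -/
noncomputable def optSpanner (G : SimpleGraph V) (w : Sym2 V → ℝ) (T : Set V) (f : ℝ → ℝ) : ℝ :=
  sInf {c : ℝ | ∃ E' : Finset (Sym2 V), IsSpanner G w T f E' ∧ setWeight w E' = c}

/-- `E'` is a subsetwise multiplicative `t`-spanner of `G` over `T`. -/
def IsSpannerMul (G : SimpleGraph V) (w : Sym2 V → ℝ) (T : Set V) (t : ℝ)
    (E' : Finset (Sym2 V)) : Prop :=
  IsSpanner G w T (fun x => t * x) E'

/-- `OPT_t(G,T)`: minimum weight of a subsetwise multiplicative `t`-spanner. -/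
noncomputable def optT (G : SimpleGraph V) (w : Sym2 V → ℝ) (t : ℝ) (T : Set V) : ℝ :=
  sInf {c : ℝ | ∃ E' : Finset (Sym2 V), IsSpannerMul G w T t E' ∧ setWeight w E' = c}

/-- Cost of a multi-level solution `F` with level-cost function `g`:
`Σ_{e ∈ F 1} g(y(e))·w(e)` where `y(e) = max { i ∈ {1,…,ℓ} : e ∈ F i }`. -/
noncomputable def mlCost [DecidableEq V] (w : Sym2 V → ℝ) (g : ℕ → ℝ) (ℓ : ℕ)
    (F : ℕ → Finset (Sym2 V)) : ℝ :=
  ∑ e ∈ F 1, g (((Finset.Icc 1 ℓ).filter (fun i => e ∈ F i)).sup id) * w e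

/-- `F` is a multi-level subsetwise `t`-spanner: a nested sequence `F ℓ ⊆ … ⊆ F 1 ⊆ E` where
each `F i` is a subsetwise `t`-spanner of `G` over `T i`. -/
def IsMLSpanner (G : SimpleGraph V) (w : Sym2 V → ℝ) (t : ℝ) (ℓ : ℕ)
    (T : ℕ → Finset V) (F : ℕ → Finset (Sym2 V)) : Prop :=
  (∀ i ∈ Finset.Icc 1 ℓ, IsSpannerMul G w ↑(T i) t (F i)) ∧
  (∀ i ∈ Finset.Icc 1 ℓ, ∀ j ∈ Finset.Icc 1 ℓ, i ≤ j → F j ⊆ F i)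

/-- `OPT_ML`: minimum cost of a multi-level subsetwise `t`-spanner. -/
noncomputable def optML [DecidableEq V] (G : SimpleGraph V) (w : Sym2 V → ℝ) (t : ℝ)
    (g : ℕ → ℝ) (ℓ : ℕ) (T : ℕ → Finset V) : ℝ :=
  sInf {c : ℝ | ∃ F : ℕ → Finset (Sym2 V), IsMLSpanner G w t ℓ T F ∧ mlCost w g ℓ F = c}


/-- Geometric-sum estimate used in the 4-approximation. -/
lemma numL (y : ℕ) (hy : 1 ≤ y) (S : Finset ℕ)
    (hS : ∀ k ∈ S, (if k = 0 then 1 else 2 ^ (k - 1) + 1) ≤ y) :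
    ∑ k ∈ S, 2 ^ k ≤ 4 * y := by
  set K := Nat.clog 2 y with hK
  have hsub : S ⊆ Finset.range (K + 1) := by
    intro k hk
    rw [Finset.mem_range, Nat.lt_succ_iff]
    rcases Nat.eq_zero_or_pos k with h0 | h1
    · simp [h0]
    · have h := hS k hk
      rw [if_neg (by omega)] at h
      have h2 : 2 ^ (k - 1) < 2 ^ K :=
        lt_of_lt_of_le (by omega) (Nat.le_pow_clog one_lt_two y)
      have := (Nat.pow_lt_pow_iff_right (by norm_num : 1 < 2)).1 h2
      omega
  have h1 : ∑ k ∈ S, 2 ^ k ≤ ∑ k ∈ Finset.range (K + 1), 2 ^ k :=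
    Finset.sum_le_sum_of_subset hsub
  have h2 : ∑ k ∈ Finset.range (K + 1), 2 ^ k < 2 ^ (K + 1) :=
    Nat.geomSum_lt le_rfl (by simp)
  have h3 : 2 ^ K ≤ 2 * y := by
    have hlog : K ≤ Nat.log 2 y + 1 :=
      (Nat.clog_le_iff_le_pow one_lt_two).2
        (le_of_lt (Nat.lt_pow_succ_log_self one_lt_two y))
    calc 2 ^ K ≤ 2 ^ (Nat.log 2 y + 1) := Nat.pow_le_pow_right (by norm_num) hlog
      _ = 2 * 2 ^ (Nat.log 2 y) := by ring
      _ ≤ 2 * y := by have := Nat.pow_log_le_self 2 (by omega : y ≠ 0); omega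
  have h4 : 2 ^ (K + 1) = 2 * 2 ^ K := by ring
  omega

lemma exchange {V : Type*} [DecidableEq V] (w : Sym2 V → ℝ) (m : ℕ)
    (A : Finset (Sym2 V)) (B : ℕ → Finset (Sym2 V))
    (hB : ∀ k ∈ Finset.range (m + 1), B k ⊆ A) (c : ℕ → ℝ) :
    ∑ k ∈ Finset.range (m + 1), c k * (∑ e ∈ B k, w e)
      = ∑ e ∈ A, (∑ k ∈ (Finset.range (m + 1)).filter (fun k => e ∈ B k), c k) * w e := by
  have h1 : ∀ k ∈ Finset.range (m + 1),
      c k * (∑ e ∈ B k, w e) = ∑ e ∈ A, if e ∈ B k then c k * w e else 0 := by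
    intro k hk
    rw [Finset.mul_sum, ← Finset.sum_filter]
    congr 1
    rw [Finset.filter_mem_eq_inter, Finset.inter_eq_right.2 (hB k hk)]
  rw [Finset.sum_congr rfl h1, Finset.sum_comm]
  refine Finset.sum_congr rfl fun e he => ?_
  rw [Finset.sum_mul, Finset.sum_filter]

/-- oracle rounding with powers of two: `4`-approximation.  Let `ℓ = 2^m`,
use linear level costs `g(i) = i`, rounding set `Q = {2^0, …, 2^m}`, and
`q(i) = 2^⌈log₂ i⌉`.  For each `k ≤ m` let `H k` be a minimum-weight subsetwise `t`-spanner
of `G` over `T (min{i : q i = 2^k})` (which is `T 1` for `k = 0` and `T (2^(k-1)+1)` for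
`k ≥ 1`), and set `Ee i = ⋃_{k : 2^k ≥ q i} H k`.  Then `Ee` is a nested multi-level
subsetwise `t`-spanner of cost at most `4·OPT_ML`. -/
theorem stmt10 {V : Type*} [Fintype V] [DecidableEq V] (G : SimpleGraph V) (w : Sym2 V → ℝ)
    (hG : G.Connected) (hw : ∀ e ∈ G.edgeSet, 0 < w e)
    (t : ℝ) (ht : 1 ≤ t) (m ℓ : ℕ) (hℓ : ℓ = 2 ^ m)
    (T : ℕ → Finset V)
    (hT : ∀ i ∈ Finset.Icc 1 ℓ, ∀ j ∈ Finset.Icc 1 ℓ, i ≤ j → T j ⊆ T i)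
    (H : ℕ → Finset (Sym2 V))
    (hH : ∀ k ∈ Finset.range (m + 1),
      IsSpannerMul G w ↑(if k = 0 then T 1 else T (2 ^ (k - 1) + 1)) t (H k) ∧
      setWeight w (H k) = optT G w t ↑(if k = 0 then T 1 else T (2 ^ (k - 1) + 1)))
    (Ee : ℕ → Finset (Sym2 V))
    (hEe : ∀ i ∈ Finset.Icc 1 ℓ,
      Ee i = ((Finset.range (m + 1)).filter
        (fun k => 2 ^ Nat.clog 2 i ≤ 2 ^ k)).biUnion H) :
    IsMLSpanner G w t ℓ T Ee ∧
    mlCost w (fun n => (n : ℝ)) ℓ Ee ≤ 4 * optML G w t (fun n => (n : ℝ)) ℓ T := by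
  classical
  have hℓ1 : 1 ≤ ℓ := hℓ ▸ Nat.one_le_two_pow
  have h1Icc : (1 : ℕ) ∈ Finset.Icc 1 ℓ := Finset.mem_Icc.2 ⟨le_rfl, hℓ1⟩
  set ik : ℕ → ℕ := fun k => if k = 0 then 1 else 2 ^ (k - 1) + 1 with hik
  have hikIcc : ∀ k ∈ Finset.range (m + 1), ik k ∈ Finset.Icc 1 ℓ := by
    intro k hk
    simp only [Finset.mem_range, Nat.lt_succ_iff] at hk
    simp only [hik, Finset.mem_Icc, hℓ]
    constructor
    · split_ifs
      · exact le_rfl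
      · exact Nat.le_add_left 1 _
    · split_ifs with h0
      · exact Nat.one_le_two_pow
      · exact Nat.succ_le_of_lt (Nat.pow_lt_pow_right one_lt_two (by omega))
  have hHE : ∀ k ∈ Finset.range (m + 1), ↑(H k) ⊆ G.edgeSet := fun k hk => (hH k hk).1.1
  have hEe' : ∀ i ∈ Finset.Icc 1 ℓ, ∀ k ∈ Finset.range (m + 1),
      Nat.clog 2 i ≤ k → H k ⊆ Ee i := by
    intro i hi k hk hki
    rw [hEe i hi]
    exact Finset.subset_biUnion_of_mem H
      (Finset.mem_filter.2 ⟨hk, Nat.pow_le_pow_right (by norm_num) hki⟩)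
  have hclog_le_m : ∀ i ∈ Finset.Icc 1 ℓ, Nat.clog 2 i ≤ m := fun i hi =>
    (Nat.clog_le_iff_le_pow one_lt_two).2 (hℓ ▸ (Finset.mem_Icc.1 hi).2)
  -- Part 1: Ee is a multi-level spanner
  have hml : IsMLSpanner G w t ℓ T Ee := by
    constructor
    · intro i hi
      have hkm : Nat.clog 2 i ≤ m := hclog_le_m i hi
      have hkr : Nat.clog 2 i ∈ Finset.range (m + 1) := by
        simp [Nat.lt_succ_iff, hkm]
      constructor
      · intro e he
        rw [Finset.mem_coe, hEe i hi, Finset.mem_biUnion] at he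
        obtain ⟨k, hk, hek⟩ := he
        exact hHE k (Finset.mem_filter.1 hk).1 hek
      · intro u hu v hv
        have hTsub : (↑(T i) : Set V) ⊆
            ↑(if Nat.clog 2 i = 0 then T 1 else T (2 ^ (Nat.clog 2 i - 1) + 1)) := by
          split_ifs with h0
          · exact Finset.coe_subset.2 (hT 1 h1Icc i hi (Finset.mem_Icc.1 hi).1)
          · have h2 : 2 ^ (Nat.clog 2 i - 1) + 1 ≤ i := by
              by_contra hc
              push_neg at hc
              have := (Nat.clog_le_iff_le_pow one_lt_two).2
                (Nat.lt_succ_iff.1 hc : i ≤ 2 ^ (Nat.clog 2 i - 1))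
              omega
            exact Finset.coe_subset.2 (hT (2 ^ (Nat.clog 2 i - 1) + 1)
              (Finset.mem_Icc.2 ⟨Nat.le_add_left 1 _, le_trans h2 (Finset.mem_Icc.1 hi).2⟩)
              i hi h2)
        obtain ⟨p, hpe, hpw⟩ := (hH (Nat.clog 2 i) hkr).1.2 u (hTsub hu) v (hTsub hv)
        exact ⟨p, fun e he => hEe' i hi (Nat.clog 2 i) hkr le_rfl (hpe e he), hpw⟩
    · intro i hi j hj hij
      rw [hEe i hi, hEe j hj]
      apply Finset.biUnion_subset_biUnion_of_subset_left
      intro k hk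
      rw [Finset.mem_filter] at hk ⊢
      exact ⟨hk.1, le_trans
        (Nat.pow_le_pow_right (by norm_num) (Nat.clog_mono_right 2 hij)) hk.2⟩
  refine ⟨hml, ?_⟩
  -- Cost bound
  have hw0 : ∀ E' : Finset (Sym2 V), ↑E' ⊆ G.edgeSet → 0 ≤ setWeight w E' :=
    fun E' hE' => Finset.sum_nonneg fun e he => le_of_lt (hw e (hE' he))
  set M : ℝ := ∑ k ∈ Finset.range (m + 1), (2 : ℝ) ^ k * setWeight w (H k) with hM
  -- Step A: mlCost Ee ≤ M
  have hHEe1 : ∀ k ∈ Finset.range (m + 1), H k ⊆ Ee 1 := fun k hk =>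
    hEe' 1 h1Icc k hk (by simp [Nat.clog_one_right])
  have hEe1E : ↑(Ee 1) ⊆ G.edgeSet := (hml.1 1 h1Icc).1
  have stepA : mlCost w (fun n => (n : ℝ)) ℓ Ee ≤ M := by
    rw [hM]
    have := exchange w m (Ee 1) H hHEe1 (fun k => (2 : ℝ) ^ k)
    simp only [setWeight] at this ⊢
    rw [this]
    apply Finset.sum_le_sum
    intro e he
    have hwe : 0 ≤ w e := le_of_lt (hw e (hEe1E he))
    apply mul_le_mul_of_nonneg_right _ hwe
    have hnat : ((Finset.Icc 1 ℓ).filter (fun i => e ∈ Ee i)).sup id ≤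
        ∑ k ∈ (Finset.range (m + 1)).filter (fun k => e ∈ H k), 2 ^ k := by
      apply Finset.sup_le
      intro i hi'
      obtain ⟨hiIcc, hiEe⟩ := Finset.mem_filter.1 hi'
      rw [hEe i hiIcc, Finset.mem_biUnion] at hiEe
      obtain ⟨k, hk, hek⟩ := hiEe
      obtain ⟨hkr, hkp⟩ := Finset.mem_filter.1 hk
      calc (id i : ℕ) ≤ 2 ^ Nat.clog 2 i := Nat.le_pow_clog one_lt_two i
        _ ≤ 2 ^ k := hkp
        _ ≤ ∑ k' ∈ (Finset.range (m + 1)).filter (fun k' => e ∈ H k'), 2 ^ k' :=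
          Finset.single_le_sum (fun _ _ => Nat.zero_le _)
            (Finset.mem_filter.2 ⟨hkr, hek⟩)
    calc ((((Finset.Icc 1 ℓ).filter (fun i => e ∈ Ee i)).sup id : ℕ) : ℝ)
        ≤ ((∑ k ∈ (Finset.range (m + 1)).filter (fun k => e ∈ H k), 2 ^ k : ℕ) : ℝ) :=
          Nat.cast_le.2 hnat
      _ = ∑ k ∈ (Finset.range (m + 1)).filter (fun k => e ∈ H k), (2 : ℝ) ^ k := by
          push_cast; rfl
  -- Step B: M ≤ 4 * mlCost F for any multi-level spanner F
  have stepB : ∀ F : ℕ → Finset (Sym2 V), IsMLSpanner G w t ℓ T F →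
      M ≤ 4 * mlCost w (fun n => (n : ℝ)) ℓ F := by
    intro F hF
    have hF1E : ↑(F 1) ⊆ G.edgeSet := (hF.1 1 h1Icc).1
    have hFsub : ∀ k ∈ Finset.range (m + 1), F (ik k) ⊆ F 1 := fun k hk =>
      hF.2 1 h1Icc (ik k) (hikIcc k hk) (Finset.mem_Icc.1 (hikIcc k hk)).1
    have hMF : M ≤ ∑ k ∈ Finset.range (m + 1), (2 : ℝ) ^ k * setWeight w (F (ik k)) := by
      rw [hM]
      apply Finset.sum_le_sum
      intro k hk
      apply mul_le_mul_of_nonneg_left _ (by positivity)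
      rw [(hH k hk).2]
      apply csInf_le
      · exact ⟨0, fun c ⟨E'', hE'', hc⟩ => hc ▸ hw0 E'' hE''.1⟩
      · refine ⟨F (ik k), ?_, rfl⟩
        have hsp := hF.1 (ik k) (hikIcc k hk)
        by_cases h0 : k = 0
        · simpa [hik, h0] using hsp
        · simpa [hik, h0] using hsp
    have hex := exchange w m (F 1) (fun k => F (ik k)) hFsub (fun k => (2 : ℝ) ^ k)
    simp only [setWeight] at hMF hex
    rw [hex] at hMF
    refine le_trans hMF ?_
    have : 4 * mlCost w (fun n => (n : ℝ)) ℓ F =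
        ∑ e ∈ F 1, 4 * ((((Finset.Icc 1 ℓ).filter (fun i => e ∈ F i)).sup id : ℕ) : ℝ) * w e := by
      rw [mlCost, Finset.mul_sum]
      exact Finset.sum_congr rfl fun e he => by ring
    rw [this]
    apply Finset.sum_le_sum
    intro e he
    have hwe : 0 ≤ w e := le_of_lt (hw e (hF1E he))
    apply mul_le_mul_of_nonneg_right _ hwe
    set y : ℕ := ((Finset.Icc 1 ℓ).filter (fun i => e ∈ F i)).sup id with hy
    have hy1 : 1 ≤ y := Finset.le_sup (f := id) (Finset.mem_filter.2 ⟨h1Icc, he⟩)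
    have hnat : ∑ k ∈ (Finset.range (m + 1)).filter (fun k => e ∈ F (ik k)), 2 ^ k
        ≤ 4 * y := by
      apply numL y hy1
      intro k hk
      obtain ⟨hkr, hkF⟩ := Finset.mem_filter.1 hk
      have : ik k ≤ y :=
        Finset.le_sup (f := id) (Finset.mem_filter.2 ⟨hikIcc k hkr, hkF⟩)
      simpa [hik] using this
    calc ∑ k ∈ (Finset.range (m + 1)).filter (fun k => e ∈ F (ik k)), (2 : ℝ) ^ k
        = ((∑ k ∈ (Finset.range (m + 1)).filter (fun k => e ∈ F (ik k)), 2 ^ k : ℕ) : ℝ) := by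
          push_cast; rfl
      _ ≤ ((4 * y : ℕ) : ℝ) := Nat.cast_le.2 hnat
      _ = 4 * (y : ℝ) := by push_cast; ring
  -- combine
  have hne : {c : ℝ | ∃ F : ℕ → Finset (Sym2 V),
      IsMLSpanner G w t ℓ T F ∧ mlCost w (fun n => (n : ℝ)) ℓ F = c}.Nonempty :=
    ⟨mlCost w (fun n => (n : ℝ)) ℓ Ee, Ee, hml, rfl⟩
  have hlb : mlCost w (fun n => (n : ℝ)) ℓ Ee / 4 ≤ optML G w t (fun n => (n : ℝ)) ℓ T := by
    apply le_csInf hne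
    rintro c ⟨F, hF, rfl⟩
    have := le_trans stepA (stepB F hF)
    linarith
  rw [optML] at hlb ⊢
  linarith
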